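/- Let X be a nonnegative real-valued random variable and let n ≥ 1 be an integer. If sup_{s∈(0,1]} E[1_{X ∈ (n−1, n)} · s^{X−n}] < ∞, then P(X ∈ (n−1, n)) = 0. -/

import Mathlib

open MeasureTheory ProbabilityTheory Filter Set
open scoped ENNReal NNReal

noncomputable section

/-- For a nonnegative random variable `X` and integer `n ≥ 1`, if
`sup_{s ∈ (0,1]} E[1_{X ∈ (n−1,n)} ⬝ s^{X−n}] < ∞`, then `P(X ∈ (n−1,n)) = 0`. -/
theorem no_mass_in_gap
    {Ω : Type*} [mΩ : MeasurableSpace Ω] {P : Measure Ω} [IsProbabilityMeasure P]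
    {X : Ω → ℝ} (hXm : Measurable X) (hX0 : ∀ᵐ ω ∂P, 0 ≤ X ω)
    {n : ℕ} (hn : 1 ≤ n)
    (hbdd : ∃ C : ℝ, ∀ s ∈ Set.Ioc (0 : ℝ) 1,
      (∫ ω in {ω | (n : ℝ) - 1 < X ω ∧ X ω < n}, s ^ (X ω - n) ∂P) ≤ C) :
    P {ω | (n : ℝ) - 1 < X ω ∧ X ω < n} = 0 := by
  obtain ⟨C, hC⟩ := hbdd
  set A : Set Ω := {ω | (n : ℝ) - 1 < X ω ∧ X ω < n} with hAdef
  have hAm : MeasurableSet A := by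
    have : A = X ⁻¹' Set.Ioo ((n:ℝ)-1) n := rfl
    rw [this]; exact hXm measurableSet_Ioo
  have key : ∀ δ : ℝ, 0 < δ → P (X ⁻¹' Set.Ioc ((n:ℝ)-1) ((n:ℝ)-δ)) = 0 := by
    intro δ hδ
    set B := X ⁻¹' Set.Ioc ((n:ℝ)-1) ((n:ℝ)-δ) with hBdef
    have hBm : MeasurableSet B := hXm measurableSet_Ioc
    have hBA : B ⊆ A := fun ω hω => ⟨hω.1, lt_of_le_of_lt hω.2 (by linarith)⟩
    have hbound : ∀ s ∈ Set.Ioc (0:ℝ) 1, (P B).toReal * s ^ (-δ) ≤ C := by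
      intro s hs
      have hs0 : (0:ℝ) < s := hs.1
      have hmeas : Measurable (fun ω => s ^ (X ω - n)) := by
        have heq : (fun ω => s ^ (X ω - n)) = fun ω => Real.exp (Real.log s * (X ω - (n:ℝ))) := by
          funext ω; rw [Real.rpow_def_of_pos hs0]
        rw [heq]; exact (measurable_const.mul (hXm.sub measurable_const)).exp
      have hintA : IntegrableOn (fun ω => s ^ (X ω - n)) A P := by
        apply Measure.integrableOn_of_bounded (measure_ne_top P A)
          hmeas.aestronglyMeasurable (M := s ^ (-1 : ℝ))
        filter_upwards [ae_restrict_mem hAm] with ω hω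
        rw [Real.norm_eq_abs, abs_of_nonneg (Real.rpow_nonneg hs0.le _)]
        exact Real.rpow_le_rpow_of_exponent_ge hs0 hs.2 (by simp only [hAdef, mem_setOf_eq] at hω; linarith [hω.1])
      have h1 : (P B).toReal * s ^ (-δ) = ∫ _ω in B, s ^ (-δ) ∂P := by
        rw [setIntegral_const, smul_eq_mul]; rfl
      have h2 : (∫ _ω in B, s ^ (-δ) ∂P) ≤ ∫ ω in B, s ^ (X ω - n) ∂P := by
        apply setIntegral_mono_on (integrableOn_const (measure_lt_top P B).ne enorm_ne_top)
          (hintA.mono_set hBA) hBm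
        intro ω hω
        exact Real.rpow_le_rpow_of_exponent_ge hs0 hs.2 (by simp only [hBdef, mem_preimage, mem_Ioc] at hω; linarith [hω.2])
      have h3 : (∫ ω in B, s ^ (X ω - n) ∂P) ≤ ∫ ω in A, s ^ (X ω - n) ∂P := by
        apply setIntegral_mono_set hintA
        · exact ae_of_all _ fun ω => Real.rpow_nonneg hs0.le _
        · exact HasSubset.Subset.eventuallyLE hBA
      calc (P B).toReal * s ^ (-δ) = ∫ _ω in B, s ^ (-δ) ∂P := h1
        _ ≤ ∫ ω in B, s ^ (X ω - n) ∂P := h2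
        _ ≤ ∫ ω in A, s ^ (X ω - n) ∂P := h3
        _ ≤ C := hC s hs
    by_contra hne
    have hp : 0 < (P B).toReal := ENNReal.toReal_pos hne (measure_ne_top P B)
    set p := (P B).toReal
    set t : ℝ := max C 1 / p + 1 with htdef
    have ht1 : 1 < t := by
      have : 0 < max C 1 / p := by positivity
      rw [htdef]; linarith
    have ht0 : (0:ℝ) < t := by linarith
    set s : ℝ := t ^ (-(1/δ)) with hsdef
    have hs0 : 0 < s := Real.rpow_pos_of_pos ht0 _
    have hs1 : s ≤ 1 := Real.rpow_le_one_of_one_le_of_nonpos ht1.le (by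
      simp only [neg_nonpos]; positivity)
    have hst : s ^ (-δ) = t := by
      rw [hsdef, ← Real.rpow_mul ht0.le]
      have : (-(1/δ)) * (-δ) = 1 := by field_simp
      rw [this, Real.rpow_one]
    have := hbound s ⟨hs0, hs1⟩
    rw [hst] at this
    have hpt : p * t = max C 1 + p := by
      rw [htdef, mul_add, mul_one, mul_div_cancel₀ _ (ne_of_gt hp)]
    have : max C 1 + p ≤ C := by rw [← hpt]; exact this
    have := le_max_left C 1
    linarith
  have hsub : A ⊆ ⋃ k : ℕ, X ⁻¹' Set.Ioc ((n:ℝ)-1) ((n:ℝ) - 1/(k+1)) := by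
    intro ω hω
    obtain ⟨k, hk⟩ := exists_nat_one_div_lt (show 0 < (n:ℝ) - X ω by linarith [hω.2])
    exact mem_iUnion.2 ⟨k, hω.1, by push_cast; linarith⟩
  exact measure_mono_null hsub (measure_iUnion_null fun k => key (1/(k+1)) (by positivity))

end
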